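/- Let μ be a Borel measure on ℝⁿ and ψ: ℝⁿ → ℝ ∪ {+∞} a convex μ-integrable function. Then dom(ψ) contains the interior of conv(supp(μ)). -/

import Mathlib

open MeasureTheory Filter
open scoped ENNReal RealInnerProductSpace

noncomputable section

abbrev En (n : ℕ) := EuclideanSpace ℝ (Fin n)

/-- Legendre transform of an `EReal`-valued function: `ψ*(y) = sup_{x ∈ dom ψ} (⟨x,y⟩ - ψ x)`. -/
def legendre {n : ℕ} (ψ : En n → EReal) (y : En n) : EReal :=
  ⨆ x : {x : En n // ψ x < ⊤}, ((⟪x.1, y⟫ : ℝ) : EReal) - ψ x.1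

/-- Convexity for `ℝ ∪ {+∞}`-valued functions. -/
def EConvexOn {n : ℕ} (ψ : En n → EReal) : Prop :=
  ∀ x y : En n, ∀ a b : ℝ, 0 ≤ a → 0 ≤ b → a + b = 1 →
    ψ (a • x + b • y) ≤ (a : EReal) * ψ x + (b : EReal) * ψ y

/-- `t ^ (-s)` with the conventions `0^(-s) = ∞`, `∞^(-s) = 0` (for `s > 0`). -/
def negPow (t : EReal) (s : ℝ) : ℝ≥0∞ :=
  if t = ⊤ then 0 else if t ≤ 0 then ⊤ else ENNReal.ofReal (t.toReal ^ (-s))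

/-- `I_p(ψ) = (∫ (ψ*)^{-(n+p)})^{-1/p} ∈ [0,∞]`. -/
def Ip (n : ℕ) (p : ℝ) (ψ : En n → EReal) : ℝ≥0∞ :=
  (∫⁻ x, negPow (legendre ψ x) ((n : ℝ) + p)) ^ (-(1 : ℝ) / p)

/-- The support of a Borel measure: points all of whose open neighborhoods have positive
measure. -/
def msupport {n : ℕ} (μ : Measure (En n)) : Set (En n) :=
  {x | ∀ U : Set (En n), IsOpen U → x ∈ U → 0 < μ U}

theorem statement9 {n : ℕ} (μ : Measure (En n)) (ψ : En n → EReal)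
    (hconv : EConvexOn ψ)
    (hint : Integrable (fun x => (ψ x).toReal) μ) (hae : ∀ᵐ x ∂μ, ψ x ≠ ⊤) :
    interior (convexHull ℝ (msupport μ)) ⊆ {x | ψ x < ⊤} := by
  set D : Set (En n) := {x | ψ x < ⊤} with hDdef
  -- `a • t ≠ ⊤` for `0 ≤ a` and `t ≠ ⊤`
  have key : ∀ (a : ℝ) (t : EReal), 0 ≤ a → t ≠ ⊤ → (a : EReal) * t ≠ ⊤ := by
    intro a t ha ht
    induction t using EReal.rec with
    | bot =>
      rcases eq_or_lt_of_le ha with h | h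
      · simp [← h]
      · rw [EReal.coe_mul_bot_of_pos h]; simp
    | coe r => rw [← EReal.coe_mul]; exact EReal.coe_ne_top _
    | top => exact absurd rfl ht
  -- `D` is convex
  have hDconv : Convex ℝ D := by
    intro x hx y hy a b ha hb hab
    have h := hconv x y a b ha hb hab
    refine lt_of_le_of_lt h ?_
    exact EReal.add_lt_top (key a _ ha (LT.lt.ne hx)) (key b _ hb (LT.lt.ne hy))
  -- the support is contained in the closure of `D`
  have hμ : μ {x | ψ x = ⊤} = 0 := by
    have := hae
    rw [ae_iff] at this
    simpa using this
  have hsupp : msupport μ ⊆ closure D := by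
    intro y hy
    rw [mem_closure_iff]
    intro U hU hyU
    by_contra hne
    rw [Set.not_nonempty_iff_eq_empty] at hne
    have hsub : U ⊆ {x | ψ x = ⊤} := by
      intro z hz
      by_contra hzD
      have : z ∈ U ∩ D := ⟨hz, lt_of_le_of_ne le_top hzD⟩
      rw [hne] at this
      exact this
    have : μ U = 0 := le_antisymm (hμ ▸ measure_mono hsub) zero_le
    exact absurd this (ne_of_gt (hy U hU hyU))
  -- hence the convex hull of the support is inside `closure D`
  have hhull : convexHull ℝ (msupport μ) ⊆ closure D :=
    convexHull_min hsupp hDconv.closure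
  intro x hx
  have hxint : x ∈ interior (closure D) := interior_mono hhull hx
  -- `closure D` has nonempty interior, hence spans everything
  have hclconv : Convex ℝ (closure D) := hDconv.closure
  have hspan_cl : affineSpan ℝ (closure D) = ⊤ :=
    hclconv.interior_nonempty_iff_affineSpan_eq_top.mp ⟨x, hxint⟩
  -- the affine span of `D` equals that of its closure
  have hspan : affineSpan ℝ D = ⊤ := by
    have hclosed : IsClosed ((affineSpan ℝ D : AffineSubspace ℝ (En n)) : Set (En n)) :=
      (affineSpan ℝ D).closed_of_finiteDimensional
    have h1 : closure D ⊆ (affineSpan ℝ D : AffineSubspace ℝ (En n)) :=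
      hclosed.closure_subset_iff.mpr (subset_affineSpan ℝ D)
    have h2 : affineSpan ℝ (closure D) ≤ affineSpan ℝ D := affineSpan_le.mpr h1
    exact top_le_iff.mp (hspan_cl ▸ h2)
  -- so `D` has nonempty interior
  obtain ⟨y, hy⟩ := hDconv.interior_nonempty_iff_affineSpan_eq_top.mpr hspan
  -- find a point `z ∈ closure D` slightly beyond `x` in the direction away from `y`
  obtain ⟨δ, hδ, hball⟩ := Metric.mem_nhds_iff.mp
    (mem_interior_iff_mem_nhds.mp hxint)
  set t : ℝ := δ / (2 * (‖x - y‖ + 1)) with htdef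
  have hnorm_pos : (0:ℝ) < ‖x - y‖ + 1 := by positivity
  have ht : 0 < t := by positivity
  have hz : x + t • (x - y) ∈ closure D := by
    apply hball
    rw [Metric.mem_ball, dist_eq_norm]
    have : x + t • (x - y) - x = t • (x - y) := by abel
    rw [this, norm_smul, Real.norm_eq_abs, abs_of_pos ht]
    calc t * ‖x - y‖ ≤ t * (‖x - y‖ + 1) := by
          exact mul_le_mul_of_nonneg_left (by linarith) ht.le
      _ = δ / 2 := by
          rw [htdef]; field_simp
      _ < δ := by linarith
  -- write `x` as a convex combination of `y ∈ interior D` and `z ∈ closure D`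
  have hx_combo : (t / (1 + t)) • y + (1 / (1 + t)) • (x + t • (x - y)) = x := by
    have h1t : (1 + t) ≠ 0 := by positivity
    rw [smul_add, smul_smul, smul_sub, ← add_assoc]
    rw [add_comm ((t / (1 + t)) • y), add_assoc]
    have : (t / (1 + t)) • y + ((1 / (1 + t) * t) • x - (1 / (1 + t) * t) • y)
        = (1 / (1 + t) * t) • x := by
      have : (t / (1 + t)) = (1 / (1 + t) * t) := by field_simp
      rw [this]; abel
    rw [this, ← add_smul]
    have : 1 / (1 + t) + 1 / (1 + t) * t = 1 := by field_simp
    rw [this, one_smul]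
  have hcombo : (t / (1 + t)) • y + (1 / (1 + t)) • (x + t • (x - y)) ∈ interior D := by
    refine hDconv.combo_interior_closure_mem_interior hy hz ?_ ?_ ?_
    · positivity
    · positivity
    · field_simp
      ring
  rw [hx_combo] at hcombo
  exact interior_subset hcombo
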